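/- Fix k, l ≥ 0 and set d = k+l, n = 2. Let B_{k,l} : M^{(k,l)} → M^{(l,k)} be the ℂ-linear map sending a (k,l)-tabloid T to the (l,k)-tabloid whose first cell is T^2 and whose second cell is T^1. Then B_{k,l} = Σ_{a,b ≥ 0, a−b = k−l} (−1)^{k−a} E_1^{(b)} ∘ F_1^{(a)} and also B_{k,l} = Σ_{a,b ≥ 0, a−b = l−k} (−1)^{l−a} F_1^{(b)} ∘ E_1^{(a)}, as ℂ-linear maps M^{(k,l)} → M^{(l,k)} (the sums are finite since terms whose superscript exceeds the relevant cell size are zero). Moreover B_{k,l} is a homomorphism of right ℂ[S_d]-modules. -/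

import Mathlib

open Finsupp

/-- The ambient free ℂ-vector space on all functions `Fin d → Fin n`. -/
abbrev Amb (d n : ℕ) : Type := (Fin d → Fin n) →₀ ℂ

/-- The `i`-th cell `T^i` of a function `T : Fin d → Fin n`. -/
def cell {d n : ℕ} (T : Fin d → Fin n) (i : Fin n) : Finset (Fin d) :=
  Finset.univ.filter fun x => T x = i

/-- `T` is a `λ`-tabloid: the `i`-th cell has `λ i` elements. -/
def IsTabloid {d n : ℕ} (lam : Fin n → ℕ) (T : Fin d → Fin n) : Prop :=
  ∀ i, (cell T i).card = lam i

/-- The permutation module `M^λ`: the span of the `λ`-tabloids inside the ambient module. -/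
noncomputable def Mmod (d n : ℕ) (lam : Fin n → ℕ) : Submodule ℂ (Amb d n) :=
  Submodule.span ℂ {v | ∃ T, IsTabloid lam T ∧ v = Finsupp.single T 1}

/-- `c_{i,R} T`: move every element of `R` into the `i`-th cell. -/
def cmod {d n : ℕ} (i : Fin n) (R : Finset (Fin d)) (T : Fin d → Fin n) : Fin d → Fin n :=
  fun x => if x ∈ R then i else T x

/-- The divided power `E_i^{(r)}`, defined on tabloids by
`E_i^{(r)} T = ∑_{R ⊆ T^{i+1}, |R| = r} c_{i,R} T`. -/
noncomputable def Emap (d n : ℕ) (i : ℕ) (h : i + 1 < n) (r : ℕ) : Amb d n →ₗ[ℂ] Amb d n :=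
  Finsupp.lift (Amb d n) ℂ (Fin d → Fin n) fun T =>
    ∑ R ∈ (cell T ⟨i + 1, h⟩).powersetCard r,
      Finsupp.single (cmod ⟨i, Nat.lt_of_succ_lt h⟩ R T) 1

/-- The divided power `F_i^{(r)}`, defined on tabloids by
`F_i^{(r)} T = ∑_{R ⊆ T^{i}, |R| = r} c_{i+1,R} T`. -/
noncomputable def Fmap (d n : ℕ) (i : ℕ) (h : i + 1 < n) (r : ℕ) : Amb d n →ₗ[ℂ] Amb d n :=
  Finsupp.lift (Amb d n) ℂ (Fin d → Fin n) fun T =>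
    ∑ R ∈ (cell T ⟨i, Nat.lt_of_succ_lt h⟩).powersetCard r,
      Finsupp.single (cmod ⟨i + 1, h⟩ R T) 1

/-- The right action of `g ∈ S_d`, `T ↦ T ∘ g`, extended linearly. -/
noncomputable def ract (d n : ℕ) (g : Equiv.Perm (Fin d)) : Amb d n →ₗ[ℂ] Amb d n :=
  Finsupp.lmapDomain ℂ ℂ fun T : Fin d → Fin n => T ∘ ⇑g

/-- The braiding `B_{k,l} : M^{(k,l)} → M^{(l,k)}`, sending a `(k,l)`-tabloid `T` to the
`(l,k)`-tabloid whose first cell is `T^2` and whose second cell is `T^1`. -/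
noncomputable def Bmap (k l : ℕ) : Amb (k + l) 2 →ₗ[ℂ] Amb (k + l) 2 :=
  Finsupp.lmapDomain ℂ ℂ fun T : Fin (k + l) → Fin 2 => (![1, 0] : Fin 2 → Fin 2) ∘ T


@[simp] lemma mem_cell {d n : ℕ} {T : Fin d → Fin n} {i : Fin n} {x : Fin d} :
    x ∈ cell T i ↔ T x = i := by simp [cell]

lemma fin2_cases : ∀ i j : Fin 2, i ≠ j → ∀ x : Fin 2, x = i ∨ x = j := by decide

lemma swap_apply : ∀ i j : Fin 2, i ≠ j → (![1,0] : Fin 2 → Fin 2) i = j := by decide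

lemma cell_cmod_same {d : ℕ} (j : Fin 2) (S : Finset (Fin d)) (T : Fin d → Fin 2) :
    cell (cmod j S T) j = cell T j ∪ S := by
  ext x
  by_cases h : x ∈ S <;> simp [cmod, h]

lemma cell_disj {d : ℕ} {T : Fin d → Fin 2} {i j : Fin 2} (hij : i ≠ j) :
    Disjoint (cell T i) (cell T j) := by
  rw [Finset.disjoint_left]
  intro x hx hx'
  simp only [mem_cell] at hx hx'
  exact hij (hx ▸ hx' ▸ rfl)

lemma cell_union {d : ℕ} {T : Fin d → Fin 2} {i j : Fin 2} (hij : i ≠ j) :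
    cell T i ∪ cell T j = Finset.univ := by
  ext x
  simpa using fin2_cases i j hij (T x)

section Bij

variable {d : ℕ} {i j : Fin 2} {T : Fin d → Fin 2}

lemma B2 (hij : i ≠ j) {S R : Finset (Fin d)} (hS : S ⊆ cell T i) (hR : R ⊆ cell T j ∪ S) :
    cell T i ∩ cell (cmod i R (cmod j S T)) j = S \ R := by
  ext x
  simp only [Finset.mem_inter, mem_cell, Finset.mem_sdiff, cmod]
  constructor
  · rintro ⟨hTx, hUx⟩
    by_cases hxR : x ∈ R
    · simp [hxR] at hUx; exact absurd hUx.symm hij.symm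
    · simp [hxR] at hUx
      by_cases hxS : x ∈ S
      · exact ⟨hxS, hxR⟩
      · simp [hxS] at hUx; exact absurd (hTx ▸ hUx : i = j) hij
  · rintro ⟨hxS, hxR⟩
    have hTx := mem_cell.mp (hS hxS)
    simp [hxR, hxS, hTx]

lemma B3 (hij : i ≠ j) {S R : Finset (Fin d)} (hS : S ⊆ cell T i) (hR : R ⊆ cell T j ∪ S) :
    cell T j ∩ cell (cmod i R (cmod j S T)) i = R \ S := by
  ext x
  simp only [Finset.mem_inter, mem_cell, Finset.mem_sdiff, cmod]
  constructor
  · rintro ⟨hTx, hUx⟩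
    have hxS : x ∉ S := fun hx => hij (((mem_cell.mp (hS hx)).symm.trans hTx))
    by_cases hxR : x ∈ R
    · exact ⟨hxR, hxS⟩
    · simp [hxR, hxS] at hUx; exact absurd (hTx ▸ hUx : j = i) hij.symm
  · rintro ⟨hxR, hxS⟩
    have : x ∈ cell T j := (Finset.mem_union.mp (hR hxR)).resolve_right hxS
    exact ⟨mem_cell.mp this, by simp [hxR]⟩

lemma B1 {S R : Finset (Fin d)} (hS : S ⊆ cell T i) :
    S ∩ R ⊆ cell T i ∩ cell (cmod i R (cmod j S T)) i := by
  intro x hx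
  rw [Finset.mem_inter] at hx ⊢
  exact ⟨hS hx.1, by simp [cmod, hx.2]⟩

end Bij

section Bij2

variable {d : ℕ} {i j : Fin 2} {T U : Fin d → Fin 2}

lemma C3 (hij : i ≠ j) {W : Finset (Fin d)} (hW : W ⊆ cell T i ∩ cell U i) :
    cmod i ((cell T j ∩ cell U i) ∪ W) (cmod j ((cell T i ∩ cell U j) ∪ W) T) = U := by
  funext x
  set S' := (cell T i ∩ cell U j) ∪ W with hS'
  set R' := (cell T j ∩ cell U i) ∪ W with hR'
  by_cases hxR : x ∈ R'
  · have : x ∈ cell U i := by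
      rcases Finset.mem_union.mp hxR with h | h
      · exact (Finset.mem_inter.mp h).2
      · exact (Finset.mem_inter.mp (hW h)).2
    simp [cmod, hxR, (mem_cell.mp this).symm]
  · by_cases hxS : x ∈ S'
    · have hxW : x ∉ W := fun h => hxR (Finset.mem_union_right _ h)
      have : x ∈ cell U j := by
        rcases Finset.mem_union.mp hxS with h | h
        · exact (Finset.mem_inter.mp h).2
        · exact absurd h hxW
      simp [cmod, hxR, hxS, (mem_cell.mp this).symm]
    · simp only [cmod, if_neg hxR, if_neg hxS]
      rcases fin2_cases i j hij (T x) with hTx | hTx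
      · rcases fin2_cases i j hij (U x) with hUx | hUx
        · exact hTx.trans hUx.symm
        · exact absurd (Finset.mem_union_left _ (Finset.mem_inter.mpr ⟨mem_cell.mpr hTx, mem_cell.mpr hUx⟩)) hxS
      · rcases fin2_cases i j hij (U x) with hUx | hUx
        · exact absurd (Finset.mem_union_left _ (Finset.mem_inter.mpr ⟨mem_cell.mpr hTx, mem_cell.mpr hUx⟩)) hxR
        · exact hTx.trans hUx.symm

lemma C4 (hij : i ≠ j) {W : Finset (Fin d)} (hW : W ⊆ cell T i ∩ cell U i) :
    ((cell T i ∩ cell U j) ∪ W) ∩ ((cell T j ∩ cell U i) ∪ W) = W := by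
  ext x
  simp only [Finset.mem_inter, Finset.mem_union, mem_cell]
  constructor
  · rintro ⟨h1 | h1, h2 | h2⟩
    · exact absurd (h1.1.symm.trans h2.1) hij
    · exact h2
    · exact h1
    · exact h1
  · intro h
    exact ⟨Or.inr h, Or.inr h⟩

lemma Cdisj1 (hij : i ≠ j) {W : Finset (Fin d)} (hW : W ⊆ cell T i ∩ cell U i) :
    Disjoint (cell T i ∩ cell U j) W := by
  refine Finset.disjoint_left.mpr fun x hx hx' => ?_
  have h1 : x ∈ cell U j := (Finset.mem_inter.mp hx).2
  have h2 : x ∈ cell U i := (Finset.mem_inter.mp (hW hx')).2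
  exact hij ((mem_cell.mp h2).symm.trans (mem_cell.mp h1))

lemma Cdisj2 (hij : i ≠ j) {W : Finset (Fin d)} (hW : W ⊆ cell T i ∩ cell U i) :
    Disjoint (cell T j ∩ cell U i) W := by
  refine Finset.disjoint_left.mpr fun x hx hx' => ?_
  have h1 : x ∈ cell T j := (Finset.mem_inter.mp hx).1
  have h2 : x ∈ cell T i := (Finset.mem_inter.mp (hW hx')).1
  exact hij ((mem_cell.mp h2).symm.trans (mem_cell.mp h1))

lemma cell_comp (hij : i ≠ j) :
    cell ((![1,0] : Fin 2 → Fin 2) ∘ T) i = cell T j := by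
  ext x
  simp only [mem_cell, Function.comp_apply]
  rcases fin2_cases i j hij (T x) with hTx | hTx
  · rw [hTx, swap_apply i j hij]
    exact eq_comm
  · rw [hTx, swap_apply j i hij.symm]
    simp [hTx]

end Bij2

lemma altSignSum {α : Type*} [DecidableEq α] (m : Finset α) :
    ∑ W ∈ m.powerset, (-1:ℂ)^(m.card - W.card) = if m = ∅ then 1 else 0 := by
  have key : ∀ W ∈ m.powerset, (-1:ℂ)^(m.card - W.card) = (-1)^m.card * (-1)^W.card := by
    intro W hW
    have hle : W.card ≤ m.card := Finset.card_le_card (Finset.mem_powerset.mp hW)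
    have h2 : (-1:ℂ)^W.card * (-1)^W.card = 1 := by
      rw [← pow_add, ← two_mul, pow_mul]; norm_num
    have h3 : (-1:ℂ)^(m.card - W.card) * (-1)^W.card = (-1)^m.card := by
      rw [← pow_add, Nat.sub_add_cancel hle]
    calc (-1:ℂ)^(m.card - W.card) = (-1:ℂ)^(m.card - W.card) * ((-1)^W.card * (-1)^W.card) := by
          rw [h2, mul_one]
      _ = ((-1:ℂ)^(m.card - W.card) * (-1)^W.card) * (-1)^W.card := by ring
      _ = (-1)^m.card * (-1)^W.card := by rw [h3]
  have hz : ∑ W ∈ m.powerset, (-1:ℂ)^W.card = if m = ∅ then 1 else 0 := by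
    have hz' := Finset.sum_powerset_neg_one_pow_card (α := α) (x := m)
    calc ∑ W ∈ m.powerset, (-1:ℂ)^W.card
        = ((∑ W ∈ m.powerset, (-1:ℤ)^W.card : ℤ) : ℂ) := by push_cast; rfl
      _ = _ := by rw [hz']; split <;> simp
  rw [Finset.sum_congr rfl key, ← Finset.mul_sum, hz]
  by_cases h : m = ∅ <;> simp [h]

lemma core {d : ℕ} (p q : ℕ) (i j : Fin 2) (hij : i ≠ j) (T : Fin d → Fin 2)
    (hp : (cell T i).card = p) (hq : (cell T j).card = q) :
    (∑ a ∈ Finset.range (p+1), ∑ b ∈ Finset.range (q+1),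
      if a + q = b + p then
        ((-1:ℂ)^(p-a)) • ∑ S ∈ (cell T i).powersetCard a,
          ∑ R ∈ (cell (cmod j S T) j).powersetCard b,
            Finsupp.single (cmod i R (cmod j S T)) (1:ℂ)
      else 0)
      = Finsupp.single ((![1,0] : Fin 2 → Fin 2) ∘ T) 1 := by
  classical
  set A := cell T i with hA
  set B := cell T j with hB
  set c : ℕ → ℕ → ℂ := fun a b => if a + q = b + p then (-1:ℂ)^(p-a) else 0 with hc
  -- Step A: push the scalar inside and swap sums
  have stepA : (∑ a ∈ Finset.range (p+1), ∑ b ∈ Finset.range (q+1),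
      if a + q = b + p then
        ((-1:ℂ)^(p-a)) • ∑ S ∈ A.powersetCard a,
          ∑ R ∈ (cell (cmod j S T) j).powersetCard b,
            Finsupp.single (cmod i R (cmod j S T)) (1:ℂ)
      else 0)
      = ∑ a ∈ Finset.range (p+1), ∑ S ∈ A.powersetCard a,
          ∑ b ∈ Finset.range (q+1), ∑ R ∈ (B ∪ S).powersetCard b,
            c a b • Finsupp.single (cmod i R (cmod j S T)) (1:ℂ) := by
    refine Finset.sum_congr rfl fun a _ => ?_
    refine (Finset.sum_congr rfl fun b _ => ?_).trans Finset.sum_comm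
    by_cases hcond : a + q = b + p
    · rw [if_pos hcond, Finset.smul_sum]
      refine Finset.sum_congr rfl fun S _ => ?_
      rw [Finset.smul_sum, cell_cmod_same]
      exact Finset.sum_congr rfl fun R _ => by simp [hc, hcond]
    · rw [if_neg hcond]
      symm
      refine Finset.sum_eq_zero fun S _ => Finset.sum_eq_zero fun R _ => ?_
      simp [hc, hcond]
  rw [stepA]
  -- Step B: merge a and S
  have stepB : (∑ a ∈ Finset.range (p+1), ∑ S ∈ A.powersetCard a,
          ∑ b ∈ Finset.range (q+1), ∑ R ∈ (B ∪ S).powersetCard b,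
            c a b • Finsupp.single (cmod i R (cmod j S T)) (1:ℂ))
      = ∑ S ∈ A.powerset, ∑ b ∈ Finset.range (q+1), ∑ R ∈ (B ∪ S).powersetCard b,
            c S.card b • Finsupp.single (cmod i R (cmod j S T)) (1:ℂ) := by
    rw [Finset.sum_powerset, hp]
    refine Finset.sum_congr rfl fun a _ => Finset.sum_congr rfl fun S hS => ?_
    rw [(Finset.mem_powersetCard.mp hS).2]
  rw [stepB]
  -- Step C: merge b and R
  have stepC : ∀ S ∈ A.powerset,
      (∑ b ∈ Finset.range (q+1), ∑ R ∈ (B ∪ S).powersetCard b,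
            c S.card b • Finsupp.single (cmod i R (cmod j S T)) (1:ℂ))
      = ∑ R ∈ (B ∪ S).powerset,
            c S.card R.card • Finsupp.single (cmod i R (cmod j S T)) (1:ℂ) := by
    intro S hS
    have hSA : S ⊆ A := Finset.mem_powerset.mp hS
    have hSp : S.card ≤ p := hp ▸ Finset.card_le_card hSA
    have hdisj : Disjoint B S := Finset.disjoint_of_subset_right hSA (cell_disj hij.symm)
    have hcard : (B ∪ S).card = q + S.card := by
      rw [Finset.card_union_of_disjoint hdisj, hq]
    rw [Finset.sum_powerset, hcard]
    rw [← Finset.sum_subset (Finset.range_subset_range.mpr (by omega : q + 1 ≤ q + S.card + 1))]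
    · refine Finset.sum_congr rfl fun b _ => Finset.sum_congr rfl fun R hR => ?_
      rw [(Finset.mem_powersetCard.mp hR).2]
    · intro b _ hb
      rw [Finset.mem_range, not_lt] at hb
      refine Finset.sum_eq_zero fun R hR => ?_
      have hRb : R.card = b := (Finset.mem_powersetCard.mp hR).2
      simp only [hc]
      rw [if_neg (by omega : ¬ (S.card + q = R.card + p))]
      simp
  rw [Finset.sum_congr rfl stepC]
  -- Step D: bijection (S,R) <-> (U,W)
  have stepD : (∑ S ∈ A.powerset, ∑ R ∈ (B ∪ S).powerset,
        c S.card R.card • Finsupp.single (cmod i R (cmod j S T)) (1:ℂ))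
      = ∑ U ∈ (Finset.univ : Finset (Fin d → Fin 2)), ∑ W ∈ (A ∩ cell U i).powerset,
          c ((A ∩ cell U j).card + W.card) ((B ∩ cell U i).card + W.card)
            • Finsupp.single U (1:ℂ) := by
    rw [Finset.sum_sigma' A.powerset (fun S => (B ∪ S).powerset) _,
        Finset.sum_sigma' Finset.univ (fun U => (A ∩ cell U i).powerset) _]
    refine Finset.sum_nbij'
      (fun x => ⟨cmod i x.2 (cmod j x.1 T), x.1 ∩ x.2⟩)
      (fun y => ⟨(A ∩ cell y.1 j) ∪ y.2, (B ∩ cell y.1 i) ∪ y.2⟩) ?_ ?_ ?_ ?_ ?_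
    · rintro ⟨S, R⟩ hx
      rw [Finset.mem_sigma] at hx ⊢
      exact ⟨Finset.mem_univ _,
        Finset.mem_powerset.mpr (B1 (Finset.mem_powerset.mp hx.1))⟩
    · rintro ⟨U, W⟩ hy
      rw [Finset.mem_sigma] at hy ⊢
      have hW : W ⊆ A ∩ cell U i := Finset.mem_powerset.mp hy.2
      refine ⟨Finset.mem_powerset.mpr (Finset.union_subset Finset.inter_subset_left
        (hW.trans Finset.inter_subset_left)), Finset.mem_powerset.mpr
        (Finset.union_subset (Finset.inter_subset_left.trans Finset.subset_union_left)
          ((Finset.subset_union_right).trans Finset.subset_union_right))⟩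
    · rintro ⟨S, R⟩ hx
      rw [Finset.mem_sigma] at hx
      have hSA : S ⊆ cell T i := Finset.mem_powerset.mp hx.1
      have hRB : R ⊆ cell T j ∪ S := Finset.mem_powerset.mp hx.2
      have h1 : (A ∩ cell (cmod i R (cmod j S T)) j) ∪ (S ∩ R) = S := by
        rw [hA, B2 hij hSA hRB, Finset.sdiff_union_inter]
      have h2 : (B ∩ cell (cmod i R (cmod j S T)) i) ∪ (S ∩ R) = R := by
        rw [hB, B3 hij hSA hRB, Finset.inter_comm S R, Finset.sdiff_union_inter]
      simp only [h1, h2]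
    · rintro ⟨U, W⟩ hy
      rw [Finset.mem_sigma] at hy
      have hW : W ⊆ cell T i ∩ cell U i := Finset.mem_powerset.mp hy.2
      have h1 := C3 (U := U) hij hW
      have h2 := C4 (U := U) hij hW
      rw [hA, hB]
      simp only [h1, h2]
    · rintro ⟨S, R⟩ hx
      rw [Finset.mem_sigma] at hx
      have hSA : S ⊆ cell T i := Finset.mem_powerset.mp hx.1
      have hRB : R ⊆ cell T j ∪ S := Finset.mem_powerset.mp hx.2
      have e1 : (A ∩ cell (cmod i R (cmod j S T)) j).card + (S ∩ R).card = S.card := by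
        rw [hA, B2 hij hSA hRB]; exact Finset.card_sdiff_add_card_inter S R
      have e2 : (B ∩ cell (cmod i R (cmod j S T)) i).card + (S ∩ R).card = R.card := by
        rw [hB, B3 hij hSA hRB, Finset.inter_comm S R]
        exact Finset.card_sdiff_add_card_inter R S
      rw [e1, e2]
  rw [stepD]
  -- partition of A by the cells of U
  have hpart : ∀ U : Fin d → Fin 2, (A ∩ cell U i).card + (A ∩ cell U j).card = p := by
    intro U
    have hdisj : Disjoint (A ∩ cell U i) (A ∩ cell U j) :=
      Finset.disjoint_of_subset_left Finset.inter_subset_right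
        (Finset.disjoint_of_subset_right Finset.inter_subset_right (cell_disj hij))
    rw [← Finset.card_union_of_disjoint hdisj, ← Finset.inter_union_distrib_left,
      cell_union hij, Finset.inter_univ, hp]
  -- characterization of the surviving U
  have charac : ∀ U : Fin d → Fin 2,
      (((A ∩ cell U j).card + q = (B ∩ cell U i).card + p) ∧ A ∩ cell U i = ∅) ↔
        U = (![1,0] : Fin 2 → Fin 2) ∘ T := by
    intro U
    constructor
    · rintro ⟨hcond, hempty⟩
      have hpU := hpart U
      rw [hempty] at hpU
      simp only [Finset.card_empty, zero_add] at hpU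
      have hy : (B ∩ cell U i).card = q := by omega
      have hBsub : B ∩ cell U i = B :=
        Finset.eq_of_subset_of_card_le Finset.inter_subset_left (by rw [hy, hq])
      have hAsub : A ∩ cell U j = A :=
        Finset.eq_of_subset_of_card_le Finset.inter_subset_left (by rw [hpU, hp])
      funext x
      rcases fin2_cases i j hij (T x) with hTx | hTx
      · have hxA : x ∈ A := by rw [hA]; exact mem_cell.mpr hTx
        have hx2 : x ∈ cell U j := (Finset.mem_inter.mp (hAsub ▸ hxA)).2
        rw [mem_cell] at hx2
        rw [hx2, Function.comp_apply, hTx, swap_apply i j hij]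
      · have hxB : x ∈ B := by rw [hB]; exact mem_cell.mpr hTx
        have hx2 : x ∈ cell U i := (Finset.mem_inter.mp (hBsub ▸ hxB)).2
        rw [mem_cell] at hx2
        rw [hx2, Function.comp_apply, hTx, swap_apply j i hij.symm]
    · rintro rfl
      have hcUi : cell ((![1,0] : Fin 2 → Fin 2) ∘ T) i = B := by
        rw [hB]; exact cell_comp hij
      have hcUj : cell ((![1,0] : Fin 2 → Fin 2) ∘ T) j = A := by
        rw [hA]; exact cell_comp hij.symm
      refine ⟨?_, ?_⟩
      · rw [hcUi, hcUj, Finset.inter_self, Finset.inter_self, hp, hq, Nat.add_comm]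
      · rw [hcUi, hA, hB]
        exact Finset.disjoint_iff_inter_eq_empty.mp (cell_disj hij)
  -- Step E: evaluate the inner alternating sum
  have stepE : ∀ U : Fin d → Fin 2,
      (∑ W ∈ (A ∩ cell U i).powerset,
          c ((A ∩ cell U j).card + W.card) ((B ∩ cell U i).card + W.card)
            • Finsupp.single U (1:ℂ))
      = (if U = (![1,0] : Fin 2 → Fin 2) ∘ T then Finsupp.single U (1:ℂ) else 0) := by
    intro U
    rw [← Finset.sum_smul]
    have hcoef : (∑ W ∈ (A ∩ cell U i).powerset,
        c ((A ∩ cell U j).card + W.card) ((B ∩ cell U i).card + W.card))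
        = if U = (![1,0] : Fin 2 → Fin 2) ∘ T then 1 else 0 := by
      by_cases hcond : (A ∩ cell U j).card + q = (B ∩ cell U i).card + p
      · have hall : ∀ W ∈ (A ∩ cell U i).powerset,
            c ((A ∩ cell U j).card + W.card) ((B ∩ cell U i).card + W.card)
            = (-1:ℂ)^((A ∩ cell U i).card - W.card) := by
          intro W hW
          have hWle : W.card ≤ (A ∩ cell U i).card :=
            Finset.card_le_card (Finset.mem_powerset.mp hW)
          have hpU := hpart U
          simp only [hc]
          rw [if_pos (by omega)]
          congr 1
          omega
        rw [Finset.sum_congr rfl hall, altSignSum]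
        have hiff : (A ∩ cell U i = ∅) ↔ U = (![1,0] : Fin 2 → Fin 2) ∘ T :=
          ⟨fun h => (charac U).mp ⟨hcond, h⟩, fun h => ((charac U).mpr h).2⟩
        simp only [hiff]
      · rw [Finset.sum_eq_zero, if_neg (fun h => hcond ((charac U).mpr h).1)]
        intro W hW
        simp only [hc]
        rw [if_neg (by omega)]
    rw [hcoef]
    split <;> simp
  rw [Finset.sum_congr rfl fun U _ => stepE U]
  rw [Finset.sum_ite_eq' Finset.univ ((![1,0] : Fin 2 → Fin 2) ∘ T)
    (fun U => Finsupp.single U (1:ℂ))]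
  simp

lemma lift_single {d n : ℕ} (f : (Fin d → Fin n) → Amb d n) (T : Fin d → Fin n) :
    Finsupp.lift (Amb d n) ℂ (Fin d → Fin n) f (Finsupp.single T 1) = f T := by
  rw [Finsupp.lift_apply, Finsupp.sum_single_index] <;> simp

lemma Fmap_single {d : ℕ} (h : (0:ℕ) + 1 < 2) (a : ℕ) (T : Fin d → Fin 2) :
    Fmap d 2 0 h a (Finsupp.single T 1)
      = ∑ S ∈ (cell T ⟨0, Nat.lt_of_succ_lt h⟩).powersetCard a,
          Finsupp.single (cmod ⟨0 + 1, h⟩ S T) (1:ℂ) := by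
  rw [Fmap]; exact lift_single _ T

lemma Emap_single {d : ℕ} (h : (0:ℕ) + 1 < 2) (b : ℕ) (T : Fin d → Fin 2) :
    Emap d 2 0 h b (Finsupp.single T 1)
      = ∑ R ∈ (cell T ⟨0 + 1, h⟩).powersetCard b,
          Finsupp.single (cmod ⟨0, Nat.lt_of_succ_lt h⟩ R T) (1:ℂ) := by
  rw [Emap]; exact lift_single _ T

lemma EF_single {d : ℕ} (h : (0:ℕ) + 1 < 2) (a b : ℕ) (T : Fin d → Fin 2) :
    Emap d 2 0 h b (Fmap d 2 0 h a (Finsupp.single T 1))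
      = ∑ S ∈ (cell T (0 : Fin 2)).powersetCard a,
          ∑ R ∈ (cell (cmod (1 : Fin 2) S T) (1 : Fin 2)).powersetCard b,
            Finsupp.single (cmod (0 : Fin 2) R (cmod (1 : Fin 2) S T)) (1:ℂ) := by
  rw [Fmap_single, map_sum]
  exact Finset.sum_congr rfl fun S _ => Emap_single h b _

lemma FE_single {d : ℕ} (h : (0:ℕ) + 1 < 2) (a b : ℕ) (T : Fin d → Fin 2) :
    Fmap d 2 0 h b (Emap d 2 0 h a (Finsupp.single T 1))
      = ∑ S ∈ (cell T (1 : Fin 2)).powersetCard a,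
          ∑ R ∈ (cell (cmod (0 : Fin 2) S T) (0 : Fin 2)).powersetCard b,
            Finsupp.single (cmod (1 : Fin 2) R (cmod (0 : Fin 2) S T)) (1:ℂ) := by
  rw [Emap_single, map_sum]
  exact Finset.sum_congr rfl fun S _ => Fmap_single h b _


/-- the braiding `B_{k,l}` equals
`Σ_{a,b ≥ 0, a−b = k−l} (−1)^{k−a} E_1^{(b)} ∘ F_1^{(a)}` and also
`Σ_{a,b ≥ 0, a−b = l−k} (−1)^{l−a} F_1^{(b)} ∘ E_1^{(a)}` as linear maps
`M^{(k,l)} → M^{(l,k)}` (terms with `a > k`, resp. `a > l`, vanish on `M^{(k,l)}`,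
so the sums are truncated accordingly); moreover `B_{k,l}` is a homomorphism of right
`ℂ[S_{k+l}]`-modules. -/
theorem stmt12 (k l : ℕ) :
    ∀ v ∈ Mmod (k + l) 2 ![k, l],
      (Bmap k l v =
        ∑ a ∈ Finset.range (k + 1), ∑ b ∈ Finset.range (l + 1),
          if a + l = b + k then
            ((-1 : ℂ)) ^ (k - a) •
              Emap (k + l) 2 0 (by norm_num) b (Fmap (k + l) 2 0 (by norm_num) a v)
          else 0) ∧
      (Bmap k l v =
        ∑ a ∈ Finset.range (l + 1), ∑ b ∈ Finset.range (k + 1),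
          if a + k = b + l then
            ((-1 : ℂ)) ^ (l - a) •
              Fmap (k + l) 2 0 (by norm_num) b (Emap (k + l) 2 0 (by norm_num) a v)
          else 0) ∧
      ∀ g : Equiv.Perm (Fin (k + l)),
        Bmap k l (ract (k + l) 2 g v) = ract (k + l) 2 g (Bmap k l v) := by
  classical
  have h01 : ((0 : Fin 2)) ≠ 1 := by decide
  have h10 : ((1 : Fin 2)) ≠ 0 := by decide
  -- generator computations
  have gen1 : ∀ T : Fin (k+l) → Fin 2, IsTabloid ![k,l] T →
      Bmap k l (Finsupp.single T 1) =
      ∑ a ∈ Finset.range (k + 1), ∑ b ∈ Finset.range (l + 1),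
        if a + l = b + k then
          ((-1 : ℂ)) ^ (k - a) • Emap (k + l) 2 0 (by norm_num) b
            (Fmap (k + l) 2 0 (by norm_num) a (Finsupp.single T 1))
        else 0 := by
    intro T hT
    have h0 : (cell T 0).card = k := by simpa using hT 0
    have h1 : (cell T 1).card = l := by simpa using hT 1
    have hB : Bmap k l (Finsupp.single T 1)
        = Finsupp.single ((![1,0] : Fin 2 → Fin 2) ∘ T) 1 := by
      rw [Bmap, Finsupp.lmapDomain_apply, Finsupp.mapDomain_single]
    rw [hB, ← core k l 0 1 h01 T h0 h1]
    refine Finset.sum_congr rfl fun a _ => Finset.sum_congr rfl fun b _ => ?_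
    by_cases hc : a + l = b + k
    · rw [if_pos hc, if_pos hc, EF_single]
    · rw [if_neg hc, if_neg hc]
  have gen2 : ∀ T : Fin (k+l) → Fin 2, IsTabloid ![k,l] T →
      Bmap k l (Finsupp.single T 1) =
      ∑ a ∈ Finset.range (l + 1), ∑ b ∈ Finset.range (k + 1),
        if a + k = b + l then
          ((-1 : ℂ)) ^ (l - a) • Fmap (k + l) 2 0 (by norm_num) b
            (Emap (k + l) 2 0 (by norm_num) a (Finsupp.single T 1))
        else 0 := by
    intro T hT
    have h0 : (cell T 0).card = k := by simpa using hT 0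
    have h1 : (cell T 1).card = l := by simpa using hT 1
    have hB : Bmap k l (Finsupp.single T 1)
        = Finsupp.single ((![1,0] : Fin 2 → Fin 2) ∘ T) 1 := by
      rw [Bmap, Finsupp.lmapDomain_apply, Finsupp.mapDomain_single]
    rw [hB, ← core l k 1 0 h10 T h1 h0]
    refine Finset.sum_congr rfl fun a _ => Finset.sum_congr rfl fun b _ => ?_
    by_cases hc : a + k = b + l
    · rw [if_pos hc, if_pos hc, FE_single]
    · rw [if_neg hc, if_neg hc]
  -- the right-hand sides as single linear maps
  set EFsum : Amb (k+l) 2 →ₗ[ℂ] Amb (k+l) 2 :=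
    ∑ a ∈ Finset.range (k+1), ∑ b ∈ Finset.range (l+1),
      if a + l = b + k then ((-1:ℂ)^(k-a)) •
        ((Emap (k+l) 2 0 (by norm_num) b).comp (Fmap (k+l) 2 0 (by norm_num) a))
      else 0 with hEFdef
  set FEsum : Amb (k+l) 2 →ₗ[ℂ] Amb (k+l) 2 :=
    ∑ a ∈ Finset.range (l+1), ∑ b ∈ Finset.range (k+1),
      if a + k = b + l then ((-1:ℂ)^(l-a)) •
        ((Fmap (k+l) 2 0 (by norm_num) b).comp (Emap (k+l) 2 0 (by norm_num) a))
      else 0 with hFEdef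
  have hEFapp : ∀ v, EFsum v = ∑ a ∈ Finset.range (k + 1), ∑ b ∈ Finset.range (l + 1),
      if a + l = b + k then ((-1 : ℂ)) ^ (k - a) • Emap (k + l) 2 0 (by norm_num) b
        (Fmap (k + l) 2 0 (by norm_num) a v) else 0 := by
    intro v
    rw [hEFdef]
    rw [LinearMap.sum_apply]
    refine Finset.sum_congr rfl fun a _ => ?_
    rw [LinearMap.sum_apply]
    refine Finset.sum_congr rfl fun b _ => ?_
    rw [apply_ite (fun (M : Amb (k+l) 2 →ₗ[ℂ] Amb (k+l) 2) => M v),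
      LinearMap.smul_apply, LinearMap.comp_apply, LinearMap.zero_apply]
  have hFEapp : ∀ v, FEsum v = ∑ a ∈ Finset.range (l + 1), ∑ b ∈ Finset.range (k + 1),
      if a + k = b + l then ((-1 : ℂ)) ^ (l - a) • Fmap (k + l) 2 0 (by norm_num) b
        (Emap (k + l) 2 0 (by norm_num) a v) else 0 := by
    intro v
    rw [hFEdef]
    rw [LinearMap.sum_apply]
    refine Finset.sum_congr rfl fun a _ => ?_
    rw [LinearMap.sum_apply]
    refine Finset.sum_congr rfl fun b _ => ?_
    rw [apply_ite (fun (M : Amb (k+l) 2 →ₗ[ℂ] Amb (k+l) 2) => M v),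
      LinearMap.smul_apply, LinearMap.comp_apply, LinearMap.zero_apply]
  intro v hv
  have hv' : v ∈ Submodule.span ℂ
      {v | ∃ T, IsTabloid ![k,l] T ∧ v = Finsupp.single T 1} := hv
  refine ⟨?_, ?_, ?_⟩
  · rw [← hEFapp]
    refine Submodule.span_induction (p := fun w _ => Bmap k l w = EFsum w)
      ?_ ?_ ?_ ?_ hv'
    · rintro x ⟨T, hT, rfl⟩
      rw [gen1 T hT, hEFapp]
    · simp
    · intro x y _ _ hx hy
      rw [map_add, map_add, hx, hy]
    · intro c x _ hx
      rw [map_smul, map_smul, hx]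
  · rw [← hFEapp]
    refine Submodule.span_induction (p := fun w _ => Bmap k l w = FEsum w)
      ?_ ?_ ?_ ?_ hv'
    · rintro x ⟨T, hT, rfl⟩
      rw [gen2 T hT, hFEapp]
    · simp
    · intro x y _ _ hx hy
      rw [map_add, map_add, hx, hy]
    · intro c x _ hx
      rw [map_smul, map_smul, hx]
  · intro g
    have heq : (Bmap k l).comp (ract (k+l) 2 g) = (ract (k+l) 2 g).comp (Bmap k l) := by
      refine Finsupp.lhom_ext fun T c => ?_
      simp only [LinearMap.comp_apply, Bmap, ract, Finsupp.lmapDomain_apply,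
        Finsupp.mapDomain_single]
      rfl
    exact LinearMap.congr_fun heq v
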